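/- Let r > 0, γ > 0, Θ ∈ (0, π/2), and k ∈ ℕ with k ≥ 1. Set ρ = √(rγ)/(r + γ) and A₁ = √(π/(k·r·γ))·(r + γ)^{2k+1}. Then (cos Θ)^{1/2}·erf(Θ·ρ·√(k/cos Θ)) ≤ (1/A₁)·∫_{−π}^{π} (r² + γ² + 2γr·cos θ)^k dθ ≤ (cos Θ)^{−1/2}·erf(Θ·ρ·√(k·cos Θ)) + (2(π − Θ)/A₁)·(r² + γ² + 2γr·cos Θ)^k. -/

import Mathlib

open Real Set MeasureTheory intervalIntegral

lemma sin_lower' {x : ℝ} (hx : 0 ≤ x) (hx2 : x < Real.pi/2) :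
    x * Real.cos x ≤ Real.sin x := by
  rcases eq_or_lt_of_le hx with h | h
  · simp [← h]
  · have ht := Real.lt_tan h hx2
    have hc : 0 < Real.cos x := Real.cos_pos_of_mem_Ioo ⟨by linarith [Real.pi_pos], hx2⟩
    rw [Real.tan_eq_sin_div_cos, lt_div_iff₀ hc] at ht
    linarith

lemma one_sub_cos_lower' {Θ φ : ℝ} (hΘ : Θ < Real.pi/2) (h0 : 0 ≤ φ) (hφ : φ ≤ Θ) :
    Real.cos Θ * φ^2 / 2 ≤ 1 - Real.cos φ := by
  have hπ := Real.pi_pos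
  set x := φ/2 with hx
  have hx0 : 0 ≤ x := by positivity
  have hx2 : x < Real.pi/2 := by
    simp only [hx]; linarith
  have h1 : x * Real.cos x ≤ Real.sin x := sin_lower' hx0 hx2
  have h2 : Real.cos (2*x) = 2*Real.cos x^2 - 1 := Real.cos_two_mul x
  have h3 : Real.sin x^2 + Real.cos x^2 = 1 := Real.sin_sq_add_cos_sq x
  have h4 : Real.cos Θ ≤ Real.cos (2*x) := by
    apply Real.cos_le_cos_of_nonneg_of_le_pi (by linarith) (by linarith) (by simp [hx]; linarith)
  have hcx : 0 ≤ Real.cos x := Real.cos_nonneg_of_mem_Icc ⟨by linarith, by linarith⟩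
  have hφ2 : φ = 2*x := by simp [hx]; ring
  have h5 : (x*Real.cos x)^2 ≤ Real.sin x^2 := by
    apply pow_le_pow_left₀ (by positivity) h1
  have h6 : Real.cos Θ ≤ Real.cos x^2 := by nlinarith [sq_nonneg (Real.sin x)]
  rw [hφ2, h2]
  nlinarith [sq_nonneg x, mul_le_mul_of_nonneg_left h6 (sq_nonneg x)]

lemma P_nonneg' (r γ θ : ℝ) (hr : 0 < r) (hγ : 0 < γ) :
    0 ≤ r^2 + γ^2 + 2*γ*r*Real.cos θ := by
  nlinarith [sq_nonneg (r-γ), mul_le_mul_of_nonneg_left (Real.neg_one_le_cos θ) (le_of_lt (mul_pos (mul_pos two_pos hγ) hr))]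

lemma key_lower' (r γ Θ θ : ℝ) (hr : 0 < r) (hγ : 0 < γ) (hΘ1 : 0 < Θ)
    (hΘ2 : Θ < Real.pi/2) (hθ : |θ| ≤ Θ) :
    (r+γ)^2 * Real.exp (-(r*γ/(r+γ)^2/Real.cos Θ * θ^2)) ≤ r^2 + γ^2 + 2*γ*r*Real.cos θ := by
  have hπ := Real.pi_pos
  have hR : 0 < r + γ := by linarith
  have hc : 0 < Real.cos Θ := Real.cos_pos_of_mem_Ioo ⟨by linarith, hΘ2⟩
  have hcθ : Real.cos Θ ≤ Real.cos θ := by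
    have h := Real.cos_le_cos_of_nonneg_of_le_pi (abs_nonneg θ) (by linarith : Θ ≤ Real.pi) hθ
    rwa [Real.cos_abs] at h
  set x := r*γ/(r+γ)^2/Real.cos Θ * θ^2 with hxdef
  set u := 2*(r*γ/(r+γ)^2)*(1 - Real.cos θ) with hudef
  have hx0 : 0 ≤ x := by positivity
  have hρ : r*γ/(r+γ)^2 ≤ 1/4 := by
    rw [div_le_iff₀ (by positivity)]; nlinarith [sq_nonneg (r-γ)]
  have hρ0 : 0 < r*γ/(r+γ)^2 := by positivity
  have hcos1 : Real.cos θ ≤ 1 := Real.cos_le_one θ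
  have hu1 : u ≤ 1 - Real.cos Θ := by
    rw [hudef]; nlinarith
  have h12 : 1 - Real.cos θ ≤ θ^2/2 := by
    nlinarith [Real.one_sub_sq_div_two_le_cos (x := θ)]
  have hu2 : u ≤ x * Real.cos Θ := by
    rw [hudef, hxdef]
    have : x * Real.cos Θ = r*γ/(r+γ)^2 * θ^2 := by
      rw [hxdef]; field_simp
    rw [hxdef] at this; rw [this]
    nlinarith
  have hu0 : 0 ≤ u := by rw [hudef]; nlinarith
  have hexp : Real.exp (-x) * (1 + x) ≤ 1 := by
    have h1 := Real.add_one_le_exp x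
    have h2 : Real.exp (-x) * Real.exp x = 1 := by
      rw [← Real.exp_add]; simp
    nlinarith [Real.exp_pos (-x)]
  have h1x : (0:ℝ) < 1 + x := by linarith
  have hkey : Real.exp (-x) ≤ 1 - u := by
    have hh : 1 ≤ (1-u)*(1+x) := by nlinarith
    have := hexp.trans hh
    exact (mul_le_mul_iff_of_pos_right h1x).mp this
  have heq : (r+γ)^2 * (1-u) = r^2 + γ^2 + 2*γ*r*Real.cos θ := by
    rw [hudef]; field_simp; ring
  nlinarith [mul_le_mul_of_nonneg_left hkey (le_of_lt (by positivity : (0:ℝ) < (r+γ)^2))]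

lemma key_upper' (r γ Θ θ : ℝ) (hr : 0 < r) (hγ : 0 < γ) (hΘ1 : 0 < Θ)
    (hΘ2 : Θ < Real.pi/2) (hθ : |θ| ≤ Θ) :
    r^2 + γ^2 + 2*γ*r*Real.cos θ ≤ (r+γ)^2 * Real.exp (-(r*γ/(r+γ)^2*Real.cos Θ * θ^2)) := by
  have hR : 0 < r + γ := by linarith
  set y := r*γ/(r+γ)^2*Real.cos Θ * θ^2 with hydef
  have h1 : 1 - y ≤ Real.exp (-y) := by linarith [Real.add_one_le_exp (-y)]
  have h2 : Real.cos Θ * θ^2 / 2 ≤ 1 - Real.cos θ := by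
    have := one_sub_cos_lower' hΘ2 (abs_nonneg θ) hθ
    rwa [sq_abs, Real.cos_abs] at this
  have hρ0 : 0 < r*γ/(r+γ)^2 := by positivity
  have h3 : r^2 + γ^2 + 2*γ*r*Real.cos θ ≤ (r+γ)^2 * (1 - y) := by
    have heq : (r+γ)^2 * (1 - y) = (r+γ)^2 - (r*γ*Real.cos Θ*θ^2) := by
      rw [hydef]; field_simp
    rw [heq]
    nlinarith [mul_le_mul_of_nonneg_left h2 (le_of_lt (by positivity : (0:ℝ) < 2*r*γ))]
  calc r^2 + γ^2 + 2*γ*r*Real.cos θ ≤ (r+γ)^2 * (1 - y) := h3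
    _ ≤ (r+γ)^2 * Real.exp (-y) := by nlinarith [sq_nonneg (r+γ)]

lemma tail_bound' (r γ Θ θ : ℝ) (hr : 0 < r) (hγ : 0 < γ) (hΘ : Θ ≤ |θ|) (hθ : |θ| ≤ Real.pi)
    (hΘ0 : 0 ≤ Θ) :
    r^2 + γ^2 + 2*γ*r*Real.cos θ ≤ r^2 + γ^2 + 2*γ*r*Real.cos Θ := by
  have h : Real.cos θ ≤ Real.cos Θ := by
    have h := Real.cos_le_cos_of_nonneg_of_le_pi hΘ0 hθ hΘ
    rwa [Real.cos_abs] at h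
  nlinarith [mul_le_mul_of_nonneg_left h (le_of_lt (mul_pos (mul_pos two_pos hγ) hr))]


lemma even_gauss' (b : ℝ) :
    (∫ t in (-b)..b, Real.exp (-t^2)) = 2 * ∫ t in (0:ℝ)..b, Real.exp (-t^2) := by
  have hcont : Continuous fun t : ℝ => Real.exp (-t^2) := by
    exact Real.continuous_exp.comp (continuous_pow 2).neg
  have h1 := intervalIntegral.integral_comp_neg (a := (0:ℝ)) (b := b) (fun t => Real.exp (-t^2))
  simp only [neg_zero, neg_sq] at h1
  have h3 := intervalIntegral.integral_add_adjacent_intervals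
    (hcont.intervalIntegrable (μ := volume) (-b) 0) (hcont.intervalIntegrable (μ := volume) 0 b)
  linarith

lemma gauss_scale' (a c : ℝ) (hc : 0 < c) :
    (∫ θ in (-a)..a, Real.exp (-(θ*c)^2)) = (2/c) * ∫ t in (0:ℝ)..(a*c), Real.exp (-t^2) := by
  have h := intervalIntegral.integral_comp_mul_right (a := -a) (b := a)
    (fun t => Real.exp (-t^2)) hc.ne'
  rw [h, show (-a)*c = -(a*c) by ring, even_gauss' (a*c)]
  simp only [smul_eq_mul]
  ring

/-- The error function `erf z = (2/√π) ∫₀^z e^{-t²} dt`. -/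
noncomputable def erf (z : ℝ) : ℝ :=
  2 / Real.sqrt Real.pi * ∫ t in (0 : ℝ)..z, Real.exp (-t ^ 2)

/-- Laplace-method bounds for the `θ`-integral: with `ρ = √(rγ)/(r+γ)` and
`A₁ = √(π/(k r γ)) (r+γ)^{2k+1}`, for `Θ ∈ (0, π/2)` and `k ≥ 1`,
`(cos Θ)^{1/2} erf(Θρ√(k/cos Θ)) ≤ (1/A₁) ∫_{-π}^π (r²+γ²+2γr cos θ)^k dθ
  ≤ (cos Θ)^{-1/2} erf(Θρ√(k cos Θ)) + (2(π-Θ)/A₁)(r²+γ²+2γr cos Θ)^k`. -/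
theorem theta_integral_laplace_bounds (r γ Θ : ℝ) (hr : 0 < r) (hγ : 0 < γ)
    (hΘ : Θ ∈ Set.Ioo 0 (Real.pi / 2)) (k : ℕ) (hk : 1 ≤ k) :
    Real.sqrt (Real.cos Θ) *
        erf (Θ * (Real.sqrt (r * γ) / (r + γ)) * Real.sqrt (k / Real.cos Θ)) ≤
      1 / (Real.sqrt (Real.pi / (k * r * γ)) * (r + γ) ^ (2 * k + 1)) *
        ∫ θ in (-Real.pi)..Real.pi, (r ^ 2 + γ ^ 2 + 2 * γ * r * Real.cos θ) ^ k ∧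
    1 / (Real.sqrt (Real.pi / (k * r * γ)) * (r + γ) ^ (2 * k + 1)) *
        (∫ θ in (-Real.pi)..Real.pi, (r ^ 2 + γ ^ 2 + 2 * γ * r * Real.cos θ) ^ k) ≤
      (Real.sqrt (Real.cos Θ))⁻¹ *
          erf (Θ * (Real.sqrt (r * γ) / (r + γ)) * Real.sqrt (k * Real.cos Θ)) +
        2 * (Real.pi - Θ) / (Real.sqrt (Real.pi / (k * r * γ)) * (r + γ) ^ (2 * k + 1)) *
          (r ^ 2 + γ ^ 2 + 2 * γ * r * Real.cos Θ) ^ k := by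
  obtain ⟨hΘ1, hΘ2⟩ := hΘ
  have hπ := Real.pi_pos
  have hR : 0 < r + γ := by linarith
  have hc : 0 < Real.cos Θ := Real.cos_pos_of_mem_Ioo ⟨by linarith, hΘ2⟩
  have hk0 : (0:ℝ) < (k:ℝ) := by exact_mod_cast Nat.pos_of_ne_zero (by omega)
  have hΘπ : Θ < Real.pi := by linarith
  set ρ := Real.sqrt (r*γ) / (r+γ) with hρdef
  have hρ0 : 0 < ρ := by rw [hρdef]; positivity
  set A := Real.sqrt (Real.pi/(k*r*γ)) * (r+γ)^(2*k+1) with hAdef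
  have hA0 : 0 < A := by rw [hAdef]; positivity
  set M := ((r+γ)^2)^k with hMdef
  have hM0 : 0 < M := by rw [hMdef]; positivity
  set PΘ := (r^2+γ^2+2*γ*r*Real.cos Θ)^k with hPΘdef
  set c₁ := ρ * Real.sqrt ((k:ℝ)/Real.cos Θ) with hc₁def
  set c₂ := ρ * Real.sqrt ((k:ℝ)*Real.cos Θ) with hc₂def
  have hc₁0 : 0 < c₁ := mul_pos hρ0 (Real.sqrt_pos.mpr (by positivity))
  have hc₂0 : 0 < c₂ := mul_pos hρ0 (Real.sqrt_pos.mpr (by positivity))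
  have contP : Continuous (fun θ : ℝ => (r^2+γ^2+2*γ*r*Real.cos θ)^k) := by
    fun_prop
  have intP : ∀ x y : ℝ, IntervalIntegrable
      (fun θ : ℝ => (r^2+γ^2+2*γ*r*Real.cos θ)^k) volume x y :=
    fun x y => contP.intervalIntegrable (μ := volume) x y
  have Pnn : ∀ θ : ℝ, 0 ≤ (r^2+γ^2+2*γ*r*Real.cos θ)^k :=
    fun θ => pow_nonneg (P_nonneg' r γ θ hr hγ) k
  have hsq1 : ∀ θ:ℝ, Real.exp (-(θ*c₁)^2)
      = Real.exp (-(r*γ/(r+γ)^2/Real.cos Θ * θ^2))^k := by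
    intro θ
    rw [← Real.exp_nat_mul]
    congr 1
    rw [hc₁def, hρdef, mul_pow, mul_pow, div_pow,
      Real.sq_sqrt (by positivity : (0:ℝ) ≤ r*γ),
      Real.sq_sqrt (by positivity : (0:ℝ) ≤ (k:ℝ)/Real.cos Θ)]
    field_simp
  have hsq2 : ∀ θ:ℝ, Real.exp (-(θ*c₂)^2)
      = Real.exp (-(r*γ/(r+γ)^2*Real.cos Θ * θ^2))^k := by
    intro θ
    rw [← Real.exp_nat_mul]
    congr 1
    rw [hc₂def, hρdef, mul_pow, mul_pow, div_pow,
      Real.sq_sqrt (by positivity : (0:ℝ) ≤ r*γ),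
      Real.sq_sqrt (by positivity : (0:ℝ) ≤ (k:ℝ)*Real.cos Θ)]
    field_simp
  have ptL : ∀ θ ∈ Set.Icc (-Θ) Θ,
      M * Real.exp (-(θ*c₁)^2) ≤ (r^2+γ^2+2*γ*r*Real.cos θ)^k := by
    intro θ hθ
    rw [hsq1 θ, hMdef, ← mul_pow]
    exact pow_le_pow_left₀ (by positivity)
      (key_lower' r γ Θ θ hr hγ hΘ1 hΘ2 (abs_le.mpr ⟨hθ.1, hθ.2⟩)) k
  have ptU : ∀ θ ∈ Set.Icc (-Θ) Θ,
      (r^2+γ^2+2*γ*r*Real.cos θ)^k ≤ M * Real.exp (-(θ*c₂)^2) := by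
    intro θ hθ
    rw [hsq2 θ, hMdef, ← mul_pow]
    exact pow_le_pow_left₀ (P_nonneg' r γ θ hr hγ)
      (key_upper' r γ Θ θ hr hγ hΘ1 hΘ2 (abs_le.mpr ⟨hθ.1, hθ.2⟩)) k
  have contG1 : Continuous (fun θ : ℝ => M * Real.exp (-(θ*c₁)^2)) := by
    exact continuous_const.mul (Real.continuous_exp.comp
      ((continuous_id.mul continuous_const).pow 2).neg)
  have contG2 : Continuous (fun θ : ℝ => M * Real.exp (-(θ*c₂)^2)) := by
    exact continuous_const.mul (Real.continuous_exp.comp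
      ((continuous_id.mul continuous_const).pow 2).neg)
  have g1 : (∫ θ in (-Θ)..Θ, M * Real.exp (-(θ*c₁)^2))
      = M * ((2/c₁) * ∫ t in (0:ℝ)..(Θ*c₁), Real.exp (-t^2)) := by
    rw [intervalIntegral.integral_const_mul, gauss_scale' Θ c₁ hc₁0]
  have g2 : (∫ θ in (-Θ)..Θ, M * Real.exp (-(θ*c₂)^2))
      = M * ((2/c₂) * ∫ t in (0:ℝ)..(Θ*c₂), Real.exp (-t^2)) := by
    rw [intervalIntegral.integral_const_mul, gauss_scale' Θ c₂ hc₂0]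
  have hsπ : 0 < Real.sqrt Real.pi := Real.sqrt_pos.mpr hπ
  have e1 : Real.sqrt (Real.pi/(k*r*γ)) * Real.sqrt (r*γ) * Real.sqrt ((k:ℝ)/Real.cos Θ)
      * Real.sqrt (Real.cos Θ) = Real.sqrt Real.pi := by
    rw [← Real.sqrt_mul (by positivity), ← Real.sqrt_mul (by positivity),
      ← Real.sqrt_mul (by positivity)]
    congr 1
    field_simp
  have e2 : Real.sqrt (Real.pi/(k*r*γ)) * Real.sqrt (r*γ) * Real.sqrt ((k:ℝ)*Real.cos Θ)
      = Real.sqrt Real.pi * Real.sqrt (Real.cos Θ) := by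
    rw [← Real.sqrt_mul (by positivity), ← Real.sqrt_mul (by positivity),
      ← Real.sqrt_mul hπ.le]
    congr 1
    field_simp
  have scalar1 : Real.sqrt (Real.cos Θ) * (2/Real.sqrt Real.pi) * A * c₁ = 2 * M := by
    rw [hAdef, hc₁def, hρdef, hMdef, ← pow_mul, pow_succ]
    calc Real.sqrt (Real.cos Θ) * (2/Real.sqrt Real.pi)
          * (Real.sqrt (Real.pi/(k*r*γ)) * ((r+γ)^(2*k) * (r+γ)))
          * (Real.sqrt (r*γ)/(r+γ) * Real.sqrt ((k:ℝ)/Real.cos Θ))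
        = (Real.sqrt (Real.pi/(k*r*γ)) * Real.sqrt (r*γ) * Real.sqrt ((k:ℝ)/Real.cos Θ)
            * Real.sqrt (Real.cos Θ)) * (2/Real.sqrt Real.pi)
            * ((r+γ)^(2*k) * ((r+γ)/(r+γ))) := by ring
      _ = Real.sqrt Real.pi * (2/Real.sqrt Real.pi) * ((r+γ)^(2*k) * 1) := by
            rw [e1, div_self hR.ne']
      _ = 2 * (r+γ)^(2*k) := by field_simp
  have scalar2 : (Real.sqrt (Real.cos Θ))⁻¹ * (2/Real.sqrt Real.pi) * A * c₂ = 2 * M := by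
    rw [hAdef, hc₂def, hρdef, hMdef, ← pow_mul, pow_succ]
    have hscΘ : Real.sqrt (Real.cos Θ) ≠ 0 := (Real.sqrt_pos.mpr hc).ne'
    calc (Real.sqrt (Real.cos Θ))⁻¹ * (2/Real.sqrt Real.pi)
          * (Real.sqrt (Real.pi/(k*r*γ)) * ((r+γ)^(2*k) * (r+γ)))
          * (Real.sqrt (r*γ)/(r+γ) * Real.sqrt ((k:ℝ)*Real.cos Θ))
        = (Real.sqrt (Real.pi/(k*r*γ)) * Real.sqrt (r*γ) * Real.sqrt ((k:ℝ)*Real.cos Θ))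
            * (2/Real.sqrt Real.pi) * (Real.sqrt (Real.cos Θ))⁻¹
            * ((r+γ)^(2*k) * ((r+γ)/(r+γ))) := by ring
      _ = (Real.sqrt Real.pi * Real.sqrt (Real.cos Θ)) * (2/Real.sqrt Real.pi)
            * (Real.sqrt (Real.cos Θ))⁻¹ * ((r+γ)^(2*k) * 1) := by
            rw [e2, div_self hR.ne']
      _ = 2 * (r+γ)^(2*k) := by field_simp
  constructor
  · -- lower bound
    rw [one_div_mul_eq_div, le_div_iff₀ hA0]
    have harg1 : Θ * ρ * Real.sqrt ((k:ℝ)/Real.cos Θ) = Θ * c₁ := by rw [hc₁def]; ring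
    calc Real.sqrt (Real.cos Θ) * erf (Θ * ρ * Real.sqrt ((k:ℝ)/Real.cos Θ)) * A
        = Real.sqrt (Real.cos Θ)
            * (2/Real.sqrt Real.pi * ∫ t in (0:ℝ)..(Θ*c₁), Real.exp (-t^2)) * A := by
          rw [harg1]; rfl
      _ = (Real.sqrt (Real.cos Θ) * (2/Real.sqrt Real.pi) * A * c₁)
            * ((1/c₁) * ∫ t in (0:ℝ)..(Θ*c₁), Real.exp (-t^2)) := by
          field_simp
      _ = 2 * M * ((1/c₁) * ∫ t in (0:ℝ)..(Θ*c₁), Real.exp (-t^2)) := by rw [scalar1]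
      _ = M * ((2/c₁) * ∫ t in (0:ℝ)..(Θ*c₁), Real.exp (-t^2)) := by ring
      _ = ∫ θ in (-Θ)..Θ, M * Real.exp (-(θ*c₁)^2) := g1.symm
      _ ≤ ∫ θ in (-Θ)..Θ, (r^2+γ^2+2*γ*r*Real.cos θ)^k :=
          intervalIntegral.integral_mono_on (by linarith)
            (contG1.intervalIntegrable (μ := volume) _ _) (intP _ _) ptL
      _ ≤ ∫ θ in (-Real.pi)..Real.pi, (r^2+γ^2+2*γ*r*Real.cos θ)^k :=
          intervalIntegral.integral_mono_interval (by linarith) (by linarith) (by linarith)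
            (Filter.Eventually.of_forall Pnn) (intP _ _)
  · -- upper bound
    rw [one_div_mul_eq_div, div_le_iff₀ hA0]
    have harg2 : Θ * ρ * Real.sqrt ((k:ℝ)*Real.cos Θ) = Θ * c₂ := by rw [hc₂def]; ring
    have B3 : (∫ θ in (-Θ)..Θ, (r^2+γ^2+2*γ*r*Real.cos θ)^k)
        ≤ (Real.sqrt (Real.cos Θ))⁻¹ * erf (Θ * ρ * Real.sqrt ((k:ℝ)*Real.cos Θ)) * A := by
      calc (∫ θ in (-Θ)..Θ, (r^2+γ^2+2*γ*r*Real.cos θ)^k)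
          ≤ ∫ θ in (-Θ)..Θ, M * Real.exp (-(θ*c₂)^2) :=
            intervalIntegral.integral_mono_on (by linarith) (intP _ _)
              (contG2.intervalIntegrable (μ := volume) _ _) ptU
        _ = M * ((2/c₂) * ∫ t in (0:ℝ)..(Θ*c₂), Real.exp (-t^2)) := g2
        _ = 2 * M * ((1/c₂) * ∫ t in (0:ℝ)..(Θ*c₂), Real.exp (-t^2)) := by ring
        _ = ((Real.sqrt (Real.cos Θ))⁻¹ * (2/Real.sqrt Real.pi) * A * c₂)
              * ((1/c₂) * ∫ t in (0:ℝ)..(Θ*c₂), Real.exp (-t^2)) := by rw [scalar2]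
        _ = (Real.sqrt (Real.cos Θ))⁻¹
              * (2/Real.sqrt Real.pi * ∫ t in (0:ℝ)..(Θ*c₂), Real.exp (-t^2)) * A := by
            field_simp
        _ = (Real.sqrt (Real.cos Θ))⁻¹ * erf (Θ * ρ * Real.sqrt ((k:ℝ)*Real.cos Θ)) * A := by
            rw [harg2]; rfl
    have ptT2 : ∀ θ ∈ Set.Icc Θ Real.pi, (r^2+γ^2+2*γ*r*Real.cos θ)^k ≤ PΘ := by
      intro θ hθ
      rw [hPΘdef]
      refine pow_le_pow_left₀ (P_nonneg' r γ θ hr hγ) ?_ k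
      exact tail_bound' r γ Θ θ hr hγ (by rw [abs_of_nonneg (by linarith [hθ.1])]; exact hθ.1)
        (by rw [abs_of_nonneg (by linarith [hθ.1])]; exact hθ.2) hΘ1.le
    have ptT1 : ∀ θ ∈ Set.Icc (-Real.pi) (-Θ), (r^2+γ^2+2*γ*r*Real.cos θ)^k ≤ PΘ := by
      intro θ hθ
      have hθ0 : θ ≤ 0 := by linarith [hθ.2]
      rw [hPΘdef]
      refine pow_le_pow_left₀ (P_nonneg' r γ θ hr hγ) ?_ k
      exact tail_bound' r γ Θ θ hr hγ (by rw [abs_of_nonpos hθ0]; linarith [hθ.2])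
        (by rw [abs_of_nonpos hθ0]; linarith [hθ.1]) hΘ1.le
    have B2 : (∫ θ in Θ..Real.pi, (r^2+γ^2+2*γ*r*Real.cos θ)^k) ≤ (Real.pi - Θ) * PΘ := by
      calc (∫ θ in Θ..Real.pi, (r^2+γ^2+2*γ*r*Real.cos θ)^k)
          ≤ ∫ _ in Θ..Real.pi, PΘ :=
            intervalIntegral.integral_mono_on (by linarith) (intP _ _)
              intervalIntegrable_const ptT2
        _ = (Real.pi - Θ) * PΘ := by simp [smul_eq_mul]
    have B1 : (∫ θ in (-Real.pi)..(-Θ), (r^2+γ^2+2*γ*r*Real.cos θ)^k)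
        ≤ (Real.pi - Θ) * PΘ := by
      calc (∫ θ in (-Real.pi)..(-Θ), (r^2+γ^2+2*γ*r*Real.cos θ)^k)
          ≤ ∫ _ in (-Real.pi)..(-Θ), PΘ :=
            intervalIntegral.integral_mono_on (by linarith) (intP _ _)
              intervalIntegrable_const ptT1
        _ = (Real.pi - Θ) * PΘ := by
            rw [intervalIntegral.integral_const, smul_eq_mul]; ring
    have split : (∫ θ in (-Real.pi)..Real.pi, (r^2+γ^2+2*γ*r*Real.cos θ)^k)
        = (∫ θ in (-Real.pi)..(-Θ), (r^2+γ^2+2*γ*r*Real.cos θ)^k)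
          + (∫ θ in (-Θ)..Θ, (r^2+γ^2+2*γ*r*Real.cos θ)^k)
          + (∫ θ in Θ..Real.pi, (r^2+γ^2+2*γ*r*Real.cos θ)^k) := by
      have s1 := intervalIntegral.integral_add_adjacent_intervals
        (intP (-Real.pi) (-Θ)) (intP (-Θ) Real.pi)
      have s2 := intervalIntegral.integral_add_adjacent_intervals
        (intP (-Θ) Θ) (intP Θ Real.pi)
      linarith
    have RHSeq : ((Real.sqrt (Real.cos Θ))⁻¹ * erf (Θ * ρ * Real.sqrt ((k:ℝ)*Real.cos Θ))
          + 2 * (Real.pi - Θ) / A * PΘ) * A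
        = (Real.sqrt (Real.cos Θ))⁻¹ * erf (Θ * ρ * Real.sqrt ((k:ℝ)*Real.cos Θ)) * A
          + 2 * (Real.pi - Θ) * PΘ := by
      field_simp
    rw [RHSeq]
    linarith
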